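/- Let (R, m) be a local ring, s ∈ m a non-zero-divisor, A a finite abelian group, and c : A × A → ℕ a commutative 2-cocycle of A with values in the additive monoid ℕ. Let B be a commutative R-algebra which is free as an R-module with basis (v_λ)_{λ ∈ A} such that v_0 = 1 and v_λ · v_{λ'} = s^{c(λ,λ')} · v_{λ+λ'} for all λ, λ' ∈ A. Then for all λ, λ' ∈ A, c(λ, λ') = min { n ∈ ℕ : s^n · v_{λ+λ'} ∈ (v_λ · v_{λ'}) }, where (v_λ · v_{λ'}) denotes the principal ideal of B generated by v_λ · v_{λ'}; equivalently, c(λ, λ') is the least n with s^n lying in the ideal quotient (v_λ v_{λ'} : v_{λ+λ'}). -/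

import Mathlib

/-- Over a local ring `(R, m)` with `s ∈ m` a non-zero-divisor, for the algebra of a ramified
`D(A)`-cover with multiplication `v λ * v λ' = s ^ c (λ, λ') • v (λ + λ')` given by a
commutative 2-cocycle `c : A × A → ℕ`, the exponent `c (λ, λ')` is recovered as the least
`n` such that `s ^ n * v (λ + λ')` lies in the principal ideal generated by `v λ * v λ'`. -/
theorem stacky_covers_order_formula (R B A : Type*) [CommRing R] [IsLocalRing R] [CommRing B]
    [Algebra R B] [AddCommGroup A] [Fintype A]
    (s : R) (hs : s ∈ IsLocalRing.maximalIdeal R) (hreg : s ∈ nonZeroDivisors R)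
    (c : A × A → ℕ)
    (hc0 : ∀ lam : A, c (0, lam) = 0)
    (hcc : ∀ lam lam' : A, c (lam, lam') = c (lam', lam))
    (hca : ∀ lam lam' lam'' : A,
      c (lam, lam') + c (lam + lam', lam'') = c (lam', lam'') + c (lam' + lam'', lam))
    (v : Module.Basis A R B) (hv0 : v 0 = 1)
    (hmul : ∀ lam lam' : A, v lam * v lam' = s ^ c (lam, lam') • v (lam + lam')) :
    ∀ lam lam' : A,
      c (lam, lam') =
        sInf {n : ℕ |
          algebraMap R B s ^ n * v (lam + lam') ∈ Ideal.span {v lam * v lam'}} := by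
  intro lam lam'
  set μ := lam + lam' with hμ
  -- s is regular on B
  have hregB : ∀ x : B, algebraMap R B s * x = 0 → x = 0 := by
    intro x hx
    apply v.repr.injective
    ext a
    have h1 : v.repr (algebraMap R B s * x) a = 0 := by rw [hx]; simp
    rw [← Algebra.smul_def, map_smul, Finsupp.smul_apply, smul_eq_mul] at h1
    have := hreg.2 _ (by rw [mul_comm]; exact h1)
    simpa using this
  have hcancel : ∀ (m : ℕ) (x y : B),
      algebraMap R B s ^ m * x = algebraMap R B s ^ m * y → x = y := by
    intro m
    induction m with
    | zero => intro x y h; simpa using h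
    | succ k ih =>
      intro x y h
      apply ih
      apply sub_eq_zero.mp
      apply hregB
      rw [mul_sub, sub_eq_zero]
      rw [pow_succ'] at h
      simpa [mul_assoc] using h
  have hkey : algebraMap R B s ^ c (lam, lam') * v μ = v lam * v lam' := by
    rw [hmul, Algebra.smul_def, map_pow]
  have hmem : c (lam, lam') ∈ {n : ℕ |
      algebraMap R B s ^ n * v μ ∈ Ideal.span {v lam * v lam'}} := by
    rw [Set.mem_setOf_eq, hkey]
    exact Ideal.mem_span_singleton_self _
  have hbound : ∀ n ∈ {n : ℕ |
      algebraMap R B s ^ n * v μ ∈ Ideal.span {v lam * v lam'}}, c (lam, lam') ≤ n := by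
    intro n hn
    by_contra hlt
    push_neg at hlt
    rw [Set.mem_setOf_eq, Ideal.mem_span_singleton] at hn
    obtain ⟨b, hb⟩ := hn
    rw [← hkey] at hb
    obtain ⟨k, hk⟩ : ∃ k, c (lam, lam') = n + (k + 1) :=
      ⟨c (lam, lam') - n - 1, by omega⟩
    rw [hk, pow_add] at hb
    have hb' : algebraMap R B s ^ n * v μ =
        algebraMap R B s ^ n * (algebraMap R B s ^ (k + 1) * (v μ * b)) := by
      rw [hb]; ring
    have hvb : v μ = algebraMap R B s ^ (k + 1) * (v μ * b) := hcancel n _ _ hb'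
    -- compare coefficients at μ
    have hco := congrArg (fun x => v.repr x μ) hvb
    simp only [← map_pow, ← Algebra.smul_def, map_smul, Finsupp.smul_apply, smul_eq_mul,
      Module.Basis.repr_self, Finsupp.single_eq_same] at hco
    -- so 1 = s^(k+1) * r, hence 1 ∈ maximal ideal
    have h1m : (1 : R) ∈ IsLocalRing.maximalIdeal R := by
      rw [hco, pow_succ, mul_comm (s ^ k) s, mul_assoc]
      exact Ideal.mul_mem_right _ _ hs
    exact (IsLocalRing.maximalIdeal.isMaximal R).ne_top (Ideal.eq_top_of_isUnit_mem _ h1m isUnit_one)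
  exact le_antisymm (le_csInf ⟨_, hmem⟩ hbound) (csInf_le (OrderBot.bddBelow _) hmem)
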